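/- Let R be a ring and M an R-module. The component at the condensed R-module LocConst(−, M) of the counit of the constant-sheaf/evaluation adjunction, i.e. the canonical morphism from the constant sheaf at the R-module LocConst(*, M) to the sheaf LocConst(−, M), is an isomorphism of condensed R-modules. -/
import Mathlib

universe u

open CategoryTheory Limits

/-- Let `R` be a ring and `M` an `R`-module. The component at the condensed `R`-module
`LocConst(−, M)` of the counit of the constant-sheaf/evaluation adjunction, i.e. the canonical
morphism from the constant sheaf at the `R`-module `LocConst(*, M)` to the sheaf
`LocConst(−, M)`, is an isomorphism of condensed `R`-modules. -/
theorem isIso_counit_app_locallyConstant_condensedMod (R : Type (u + 1)) [Ring R]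
    (M : ModuleCat.{u + 1} R) :
    IsIso ((Condensed.discreteUnderlyingAdj (ModuleCat.{u + 1} R)).counit.app
      ((CondensedMod.LocallyConstant.functor R).obj M)) := by
  exact ((CondensedMod.isDiscrete_tfae R ((CondensedMod.LocallyConstant.functor R).obj M)).out 3 1).mp (Functor.obj_mem_essImage _ M)
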